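/- Let $z \in \mathbb{C}$ with $0 < |z| $ and $-\pi < \arg(z) < \pi$, let $a > 0$, and for $k \in \mathbb{Z}$ set $t_k = a(\ln|z| + i(\arg z + 2k\pi))$. Then $\Re\sqrt{-t_0} < \Re\sqrt{-t_k}$ for all $k \neq 0$, where $\sqrt{\cdot}$ is the principal square root; i.e., $t_0$ is the pole closest to the nonnegative real axis in the sense of the parabolic level sets $\Re\sqrt{-w} = \text{const}$. -/

import Mathlib

/-- For `|arg z| < π`, the pole `t₀` is strictly inside the parabola through any
other pole `t_k`: `Re √(-t₀) < Re √(-t_k)` for all `k ≠ 0` (principal square root). -/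
theorem pole_t0_closest (z : ℂ) (hz : z ≠ 0)
    (harg1 : -Real.pi < z.arg) (harg2 : z.arg < Real.pi) (a : ℝ) (ha : 0 < a)
    (t : ℤ → ℂ)
    (ht : ∀ k : ℤ, t k = (a : ℂ) * (Real.log ‖z‖ +
      Complex.I * ((z.arg : ℂ) + 2 * (k : ℂ) * (Real.pi : ℂ)))) :
    ∀ k : ℤ, k ≠ 0 → ((-(t 0)) ^ ((1 : ℂ) / 2)).re < ((-(t k)) ^ ((1 : ℂ) / 2)).re := by
  intro k hk
  set L := Real.log ‖z‖ with hL
  set θ := z.arg with hθ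
  have hπ := Real.pi_pos
  have hre : ∀ m : ℤ, (t m).re = a * L := by
    intro m; rw [ht m]; simp
  have him : ∀ m : ℤ, (t m).im = a * (θ + 2 * m * Real.pi) := by
    intro m; rw [ht m]; simp
  have habs : ‖t 0‖ < ‖t k‖ := by
    have h0 : ‖t 0‖ ^ 2 < ‖t k‖ ^ 2 := by
      rw [Complex.sq_norm, Complex.sq_norm, Complex.normSq_apply, Complex.normSq_apply,
        hre 0, hre k, him 0, him k]
      have hθk : θ ^ 2 < (θ + 2 * (k : ℝ) * Real.pi) ^ 2 := by
        rcases hk.lt_or_gt with h | h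
        · have hk' : k ≤ -1 := by omega
          have hk1 : (k : ℝ) ≤ -1 := by exact_mod_cast hk'
          have h1 : θ + (k : ℝ) * Real.pi < 0 := by nlinarith
          have h2 : (k : ℝ) * Real.pi < 0 := by nlinarith
          nlinarith [mul_pos (neg_pos.mpr h2) (neg_pos.mpr h1)]
        · have hk' : 1 ≤ k := by omega
          have hk1 : (1 : ℝ) ≤ (k : ℝ) := by exact_mod_cast hk'
          have h1 : 0 < θ + (k : ℝ) * Real.pi := by nlinarith
          have h2 : 0 < (k : ℝ) * Real.pi := by nlinarith
          nlinarith [mul_pos h2 h1]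
      have hmul := mul_lt_mul_of_pos_left hθk (mul_pos ha ha)
      push_cast
      nlinarith [hmul]
    exact lt_of_pow_lt_pow_left₀ 2 (norm_nonneg _) h0
  have key : ∀ m : ℤ, ((-(t m)) ^ ((1 : ℂ) / 2)).re =
      Real.sqrt ((‖t m‖ + -(a * L)) / 2) := by
    intro m
    rw [one_div, Complex.cpow_inv_two_re, norm_neg, Complex.neg_re, hre m]
  rw [key 0, key k]
  apply Real.sqrt_lt_sqrt
  · have := Complex.abs_re_le_norm (t 0)
    rw [hre 0] at this
    have := abs_le.mp this
    linarith [this.1, this.2]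
  · linarith
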